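/- Let q ∈ ℂ with q ≠ 0 and q^k ≠ 1 for k = 1,2,3,4. Let A be the 4×4 complex matrix A = diag(q, q, q, 1) + e₁₂ + e₂₃, i.e. a 3×3 simplest Jordan block with eigenvalue q together with the diagonal entry 1. Then {B ∈ M₄(ℂ) : AB = qBA} = ℂ·e₁₄ and {B' ∈ M₄(ℂ) : B'A = qAB'} = ℂ·e₄₃. Consequently the product of any element of the first space with any element of the second space, in at least one of the two orders, is zero (e₄₃·e₁₄ = 0). -/

import Mathlib

open Matrix

private lemma zsolve (c x : ℂ) (hc : c ≠ 0) (h : c * x = 0) : x = 0 :=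
  (mul_eq_zero.mp h).resolve_left hc

set_option maxHeartbeats 1000000 in
/-- For `A` a `3×3` simplest Jordan block with eigenvalue `q` together with the
diagonal entry `1`, the space `B(A)` is `ℂ·e₁₄`, the space `B'(A)` is `ℂ·e₄₃`,
and the product `B'·B` of any members of the two spaces vanishes. -/
theorem jordan3_qcomm_spaces
    (q : ℂ) (hq0 : q ≠ 0) (hq : ∀ k : ℕ, 1 ≤ k → k ≤ 4 → q ^ k ≠ 1)
    (A : Matrix (Fin 4) (Fin 4) ℂ)
    (hA : A = diagonal ![q, q, q, 1] +
      single (0 : Fin 4) (1 : Fin 4) (1 : ℂ) +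
      single (1 : Fin 4) (2 : Fin 4) (1 : ℂ)) :
    (∀ B : Matrix (Fin 4) (Fin 4) ℂ, A * B = q • (B * A) ↔
      ∃ c : ℂ, B = c • single (0 : Fin 4) (3 : Fin 4) (1 : ℂ)) ∧
    (∀ B' : Matrix (Fin 4) (Fin 4) ℂ, B' * A = q • (A * B') ↔
      ∃ c : ℂ, B' = c • single (3 : Fin 4) (2 : Fin 4) (1 : ℂ)) ∧
    (∀ B B' : Matrix (Fin 4) (Fin 4) ℂ,
      A * B = q • (B * A) → B' * A = q • (A * B') → B' * B = 0) := by
  subst hA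
  have h1 : q ≠ 1 := by simpa using hq 1 (by norm_num) (by norm_num)
  have h2 : q ^ 2 ≠ 1 := hq 2 (by norm_num) (by norm_num)
  have n1 : (1 : ℂ) - q ≠ 0 := sub_ne_zero.mpr (Ne.symm h1)
  have n2 : (1 : ℂ) - q ^ 2 ≠ 0 := sub_ne_zero.mpr (Ne.symm h2)
  have nq1 : q * (1 - q) ≠ 0 := mul_ne_zero hq0 n1
  have P1 : ∀ B : Matrix (Fin 4) (Fin 4) ℂ,
      (diagonal ![q, q, q, 1] + single 0 1 1 + single 1 2 1) * B =
        q • (B * (diagonal ![q, q, q, 1] + single 0 1 1 + single 1 2 1)) ↔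
      ∃ c : ℂ, B = c • single (0 : Fin 4) (3 : Fin 4) (1 : ℂ) := by
    intro B
    constructor
    · intro h
      have e : ∀ i j : Fin 4, _ := fun i j => congrFun (congrFun h i) j
      have e00 := e 0 0; have e01 := e 0 1; have e02 := e 0 2; have e03 := e 0 3
      have e10 := e 1 0; have e11 := e 1 1; have e12 := e 1 2; have e13 := e 1 3
      have e20 := e 2 0; have e21 := e 2 1; have e22 := e 2 2
      have e30 := e 3 0; have e31 := e 3 1; have e32 := e 3 2; have e33 := e 3 3
      simp [Matrix.mul_apply, Fin.sum_univ_four, Matrix.add_apply, Matrix.diagonal_apply,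
        Matrix.single, Matrix.smul_apply] at e00 e01 e02 e03 e10 e11 e12 e13 e20 e21 e22 e30 e31 e32 e33
      replace e20 := e20.resolve_right hq0
      replace e21 := e21.resolve_right hq0
      replace e22 := e22.resolve_right hq0
      have b13 : B 1 3 = 0 := e03
      have b23 : B 2 3 = 0 := e13
      have b20 : B 2 0 = 0 := zsolve _ _ n1 (by linear_combination e20)
      have b21 : B 2 1 = 0 := zsolve _ _ n1 (by linear_combination e21 + b20)
      have b22 : B 2 2 = 0 := zsolve _ _ n1 (by linear_combination e22 + b21)
      have b33 : B 3 3 = 0 := zsolve _ _ n1 (by linear_combination e33)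
      have b30 : B 3 0 = 0 := zsolve _ _ n2 (by linear_combination e30)
      have b31 : B 3 1 = 0 := zsolve _ _ n2 (by linear_combination e31 + q * b30)
      have b32 : B 3 2 = 0 := zsolve _ _ n2 (by linear_combination e32 + q * b31)
      have b10 : B 1 0 = 0 := zsolve _ _ nq1 (by linear_combination e10 - b20)
      have b11 : B 1 1 = 0 := zsolve _ _ nq1 (by linear_combination e11 - b21 + q * b10)
      have b12 : B 1 2 = 0 := zsolve _ _ nq1 (by linear_combination e12 - b22 + q * b11)
      have b00 : B 0 0 = 0 := zsolve _ _ nq1 (by linear_combination e00 - b10)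
      have b01 : B 0 1 = 0 := zsolve _ _ nq1 (by linear_combination e01 - b11 + q * b00)
      have b02 : B 0 2 = 0 := zsolve _ _ nq1 (by linear_combination e02 - b12 + q * b01)
      refine ⟨B 0 3, ?_⟩
      ext i j
      fin_cases i <;> fin_cases j <;>
        simp [Matrix.single, Matrix.smul_apply, b00, b01, b02, b10, b11, b12, b13,
          b20, b21, b22, b23, b30, b31, b32, b33]
    · rintro ⟨c, rfl⟩
      ext i j
      fin_cases i <;> fin_cases j <;>
        simp [Matrix.mul_apply, Fin.sum_univ_four, Matrix.add_apply, Matrix.diagonal_apply,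
          Matrix.single, Matrix.smul_apply] <;> ring
  have P2 : ∀ B : Matrix (Fin 4) (Fin 4) ℂ,
      B * (diagonal ![q, q, q, 1] + single 0 1 1 + single 1 2 1) =
        q • ((diagonal ![q, q, q, 1] + single 0 1 1 + single 1 2 1) * B) ↔
      ∃ c : ℂ, B = c • single (3 : Fin 4) (2 : Fin 4) (1 : ℂ) := by
    intro B
    constructor
    · intro h
      have e : ∀ i j : Fin 4, _ := fun i j => congrFun (congrFun h i) j
      have e00 := e 0 0; have e01 := e 0 1; have e02 := e 0 2; have e03 := e 0 3
      have e10 := e 1 0; have e11 := e 1 1; have e12 := e 1 2; have e13 := e 1 3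
      have e20 := e 2 0; have e21 := e 2 1; have e22 := e 2 2; have e23 := e 2 3
      have e31 := e 3 1; have e32 := e 3 2; have e33 := e 3 3
      simp [Matrix.mul_apply, Fin.sum_univ_four, Matrix.add_apply, Matrix.diagonal_apply,
        Matrix.single, Matrix.smul_apply] at e00 e01 e02 e03 e10 e11 e12 e13 e20 e21 e22 e23 e31 e32 e33
      have b20 : B 2 0 = 0 := zsolve _ _ nq1 (by linear_combination e20)
      have b10 : B 1 0 = 0 := zsolve _ _ nq1 (by linear_combination e10 + q * b20)
      have b00 : B 0 0 = 0 := zsolve _ _ nq1 (by linear_combination e00 + q * b10)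
      have b30 : B 3 0 = 0 := by linear_combination e31
      have b31 : B 3 1 = 0 := by linear_combination e32
      have b33 : B 3 3 = 0 := zsolve _ _ n1 (by linear_combination e33)
      have b21 : B 2 1 = 0 := zsolve _ _ nq1 (by linear_combination e21 - b20)
      have b11 : B 1 1 = 0 := zsolve _ _ nq1 (by linear_combination e11 - b10 + q * b21)
      have b01 : B 0 1 = 0 := zsolve _ _ nq1 (by linear_combination e01 - b00 + q * b11)
      have b22 : B 2 2 = 0 := zsolve _ _ nq1 (by linear_combination e22 - b21)
      have b12 : B 1 2 = 0 := zsolve _ _ nq1 (by linear_combination e12 - b11 + q * b22)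
      have b02 : B 0 2 = 0 := zsolve _ _ nq1 (by linear_combination e02 - b01 + q * b12)
      have b23 : B 2 3 = 0 := zsolve _ _ n2 (by linear_combination e23)
      have b13 : B 1 3 = 0 := zsolve _ _ n2 (by linear_combination e13 + q * b23)
      have b03 : B 0 3 = 0 := zsolve _ _ n2 (by linear_combination e03 + q * b13)
      refine ⟨B 3 2, ?_⟩
      ext i j
      fin_cases i <;> fin_cases j <;>
        simp [Matrix.single, Matrix.smul_apply, b00, b01, b02, b03, b10, b11, b12, b13,
          b20, b21, b22, b23, b30, b31, b33]
    · rintro ⟨c, rfl⟩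
      ext i j
      fin_cases i <;> fin_cases j <;>
        simp [Matrix.mul_apply, Fin.sum_univ_four, Matrix.add_apply, Matrix.diagonal_apply,
          Matrix.single, Matrix.smul_apply] <;> ring
  refine ⟨P1, P2, ?_⟩
  intro B B' hB hB'
  obtain ⟨c, rfl⟩ := (P1 B).mp hB
  obtain ⟨c', rfl⟩ := (P2 B').mp hB'
  ext i j
  simp [Matrix.mul_apply, Fin.sum_univ_four, Matrix.single, Matrix.smul_apply]
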